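/- If 0 ≤ c ≤ 1/2, then for every η > 0 the exponentially weighted forecaster with abstention satisfies the slow-rate bound ∑_{t=1}^T E[ℓ̂_t] − min_{i∈[N]} ∑_{t=1}^T ℓ_{t,i} ≤ (log N)/η + ηT/8. -/

import Mathlib

noncomputable section

/-- Binary loss of expert `i` in round `t`: `1[y_{t,i} ≠ y_t]`. -/
def expertLoss {N : ℕ} (adv : ℕ → Fin N → ℝ) (y : ℕ → ℝ) (t : ℕ) (i : Fin N) : ℝ :=
  if adv t i = y t then 0 else 1

/-- Normalized exponential weight `q_{t,i}` of expert `i` in round `t`. -/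
def ewQ {N : ℕ} (η : ℝ) (adv : ℕ → Fin N → ℝ) (y : ℕ → ℝ) (t : ℕ) (i : Fin N) : ℝ :=
  Real.exp (-η * ∑ k ∈ Finset.range t, expertLoss adv y k i) /
    ∑ j, Real.exp (-η * ∑ k ∈ Finset.range t, expertLoss adv y k j)

/-- Aggregated prediction `p_t = ∑ i, q_{t,i} y_{t,i}`. -/
def aggP {N : ℕ} (η : ℝ) (adv : ℕ → Fin N → ℝ) (y : ℕ → ℝ) (t : ℕ) : ℝ :=
  ∑ i, ewQ η adv y t i * adv t i

/-- Expected per-round loss of the exponentially weighted forecaster with abstention: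
with `p* = max(p_t, 1 - p_t)`, `k* = 1[p_t ≥ 1/2]` and `α_t = 2(1 - p*)`, the expected
loss is `α_t · c_t + (1 - α_t) · 1[k* ≠ y_t]`. -/
def expAlgLoss {N : ℕ} (η : ℝ) (c : ℕ → ℝ) (adv : ℕ → Fin N → ℝ) (y : ℕ → ℝ) (t : ℕ) : ℝ :=
  let p := aggP η adv y t
  let pstar := max p (1 - p)
  let kstar : ℝ := if (1 : ℝ) / 2 ≤ p then 1 else 0
  let α := 2 * (1 - pstar)
  α * c t + (1 - α) * (if kstar = y t then 0 else 1)

end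


/-- `tanh`-type bound: `2(1 - e^{-x}) ≤ x(1 + e^{-x})` for `x ≥ 0`. -/
lemma tanh_aux (x : ℝ) (hx : 0 ≤ x) :
    2 * (1 - Real.exp (-x)) ≤ x * (1 + Real.exp (-x)) := by
  have key : Monotone (fun x : ℝ => x * (1 + Real.exp (-x)) - 2 * (1 - Real.exp (-x))) := by
    apply monotone_of_hasDerivAt_nonneg (f' := fun x => 1 - Real.exp (-x) - x * Real.exp (-x))
    · intro x
      have he : HasDerivAt (fun x : ℝ => Real.exp (-x)) (-Real.exp (-x)) x := by
        simpa [Function.comp_def] using (Real.hasDerivAt_exp (-x)).comp x (hasDerivAt_neg x)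
      have h1 : HasDerivAt (fun x : ℝ => x * (1 + Real.exp (-x)))
          (1 * (1 + Real.exp (-x)) + x * (0 + -Real.exp (-x))) x :=
        (hasDerivAt_id x).mul ((hasDerivAt_const x (1:ℝ)).add he)
      have h2 : HasDerivAt (fun x : ℝ => 2 * (1 - Real.exp (-x)))
          (2 * (0 - -Real.exp (-x))) x :=
        ((hasDerivAt_const x (1:ℝ)).sub he).const_mul 2
      exact (h1.sub h2).congr_deriv (by ring)
    · intro x
      have h := Real.add_one_le_exp x
      have he : 0 < Real.exp (-x) := Real.exp_pos _
      have : (x + 1) * Real.exp (-x) ≤ Real.exp x * Real.exp (-x) :=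
        mul_le_mul_of_nonneg_right h he.le
      rw [← Real.exp_add] at this
      simp only [add_neg_cancel, Real.exp_zero] at this
      simp only [Pi.zero_apply]
      nlinarith
  have h0 := key hx
  simp only [neg_zero, Real.exp_zero] at h0
  nlinarith [h0]

lemma denom_pos {p : ℝ} (hp0 : 0 ≤ p) (hp1 : p ≤ 1) (t : ℝ) :
    0 < 1 - p + p * Real.exp (-t) := by
  have hE : 0 < Real.exp (-t) := Real.exp_pos _
  rcases le_total (Real.exp (-t)) 1 with h | h
  · nlinarith
  · nlinarith

/-- Hoeffding's lemma for a Bernoulli distribution. -/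
lemma bernoulli_hoeffding {p : ℝ} (hp0 : 0 ≤ p) (hp1 : p ≤ 1) {t : ℝ} (ht : 0 ≤ t) :
    Real.log (1 - p + p * Real.exp (-t)) ≤ -(t * p) + t ^ 2 / 8 := by
  set F : ℝ → ℝ := fun s => Real.log (1 - p + p * Real.exp (-s)) + s * p - s ^ 2 / 8 with hF
  have hD : ∀ s : ℝ, 0 < 1 - p + p * Real.exp (-s) := fun s => denom_pos hp0 hp1 s
  have hder : ∀ s : ℝ, HasDerivAt F
      ((0 + p * -Real.exp (-s)) / (1 - p + p * Real.exp (-s)) + 1 * p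
        - (2 : ℕ) * s ^ 1 / 8) s := by
    intro s
    have he : HasDerivAt (fun x : ℝ => Real.exp (-x)) (-Real.exp (-s)) s := by
      simpa [Function.comp_def] using (Real.hasDerivAt_exp (-s)).comp s (hasDerivAt_neg s)
    have hin : HasDerivAt (fun x : ℝ => 1 - p + p * Real.exp (-x))
        (0 + p * -Real.exp (-s)) s :=
      (hasDerivAt_const s (1 - p)).add (he.const_mul p)
    have hlog := hin.log (hD s).ne'
    have hlin : HasDerivAt (fun x : ℝ => x * p) (1 * p) s := (hasDerivAt_id s).mul_const p
    have hsq : HasDerivAt (fun x : ℝ => x ^ 2 / 8) ((2 : ℕ) * s ^ 1 / 8) s :=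
      (hasDerivAt_pow 2 s).div_const 8
    exact (hlog.add hlin).sub hsq
  have hnonpos : ∀ s ∈ interior (Set.Ici (0 : ℝ)),
      (0 + p * -Real.exp (-s)) / (1 - p + p * Real.exp (-s)) + 1 * p
        - (2 : ℕ) * s ^ 1 / 8 ≤ 0 := by
    intro s hs
    rw [interior_Ici, Set.mem_Ioi] at hs
    set u := Real.exp (-(s / 2)) with hu
    have hu0 : 0 < u := Real.exp_pos _
    have hu1 : u ≤ 1 := Real.exp_le_one_iff.2 (by linarith)
    have huu : u * u = Real.exp (-s) := by rw [← Real.exp_add]; congr 1; ring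
    have htanh := tanh_aux (s / 2) (by linarith)
    have hDu : 0 < 1 - p + p * (u * u) := by rw [huu]; exact hD s
    have hA : p * (1 - p) * (1 + u) ^ 2 ≤ 1 - p + p * (u * u) := by
      nlinarith [sq_nonneg (1 - p - p * u)]
    have hB : (1 - u) * (p * (1 - p) * (1 + u) ^ 2) ≤ (1 - u) * (1 - p + p * (u * u)) :=
      mul_le_mul_of_nonneg_left hA (by linarith)
    have hC : (2 * (1 - u)) * (1 - p + p * (u * u))
        ≤ ((s / 2) * (1 + u)) * (1 - p + p * (u * u)) :=
      mul_le_mul_of_nonneg_right htanh hDu.le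
    have hDstep : p * (1 - p) * (1 - u * u) ≤ (s / 4) * (1 - p + p * (u * u)) := by
      nlinarith [hB, hC, hu0]
    have h1 : (p - s / 4) * (1 - p + p * Real.exp (-s)) ≤ p * Real.exp (-s) := by
      rw [← huu]; nlinarith [hDstep]
    have h2 : p - s / 4 ≤ p * Real.exp (-s) / (1 - p + p * Real.exp (-s)) :=
      (le_div_iff₀ (hD s)).mpr h1
    have h3 : (0 + p * -Real.exp (-s)) / (1 - p + p * Real.exp (-s))
        = -(p * Real.exp (-s) / (1 - p + p * Real.exp (-s))) := by ring
    rw [h3]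
    push_cast
    linarith [h2]
  have hdiff : Differentiable ℝ F := fun s => (hder s).differentiableAt
  have hcont : ContinuousOn F (Set.Ici 0) := hdiff.continuous.continuousOn
  have hA : AntitoneOn F (Set.Ici 0) := by
    apply antitoneOn_of_hasDerivWithinAt_nonpos (convex_Ici 0) hcont
      (fun s hs => (hder s).hasDerivWithinAt) hnonpos
  have hF0 : F 0 = 0 := by simp [hF]
  have := hA Set.self_mem_Ici (Set.mem_Ici.2 ht) ht
  rw [hF0] at this
  have : Real.log (1 - p + p * Real.exp (-t)) + t * p - t ^ 2 / 8 ≤ 0 := this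
  linarith

lemma per_round {N : ℕ} (hN : 2 ≤ N) (η c : ℝ) (hc0 : 0 ≤ c) (hc : c ≤ 1 / 2)
    (adv : ℕ → Fin N → ℝ) (y : ℕ → ℝ) (t : ℕ)
    (hadv : ∀ i, adv t i = 0 ∨ adv t i = 1) (hy : y t = 0 ∨ y t = 1) :
    expAlgLoss η (fun _ => c) adv y t
      ≤ ∑ i, ewQ η adv y t i * expertLoss adv y t i := by
  have hne : (Finset.univ : Finset (Fin N)).Nonempty := by
    haveI : Nonempty (Fin N) := Fin.pos_iff_nonempty.mp (by omega)
    exact Finset.univ_nonempty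
  have hWpos : 0 < ∑ j, Real.exp (-η * ∑ k ∈ Finset.range t, expertLoss adv y k j) :=
    Finset.sum_pos (fun j _ => Real.exp_pos _) hne
  have hq0 : ∀ i, 0 ≤ ewQ η adv y t i := fun i =>
    div_nonneg (Real.exp_pos _).le hWpos.le
  have hq1 : ∑ i, ewQ η adv y t i = 1 := by
    simp only [ewQ]
    rw [← Finset.sum_div, div_self hWpos.ne']
  set p := aggP η adv y t with hp
  have hp0 : 0 ≤ p := Finset.sum_nonneg fun i _ => by
    rcases hadv i with h | h <;> rw [h] <;> simp [hq0 i]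
  have hp1 : p ≤ 1 := by
    calc p ≤ ∑ i, ewQ η adv y t i := Finset.sum_le_sum fun i _ => by
            rcases hadv i with h | h <;> rw [h] <;> simp [hq0 i]
      _ = 1 := hq1
  have hm : (∑ i, ewQ η adv y t i * expertLoss adv y t i)
      = if y t = 1 then 1 - p else p := by
    rcases hy with h | h
    · rw [if_neg (by rw [h]; norm_num)]
      rw [hp, aggP]
      apply Finset.sum_congr rfl
      intro i _
      congr 1
      rcases hadv i with h2 | h2 <;> simp [expertLoss, h, h2]
    · rw [if_pos h]
      have : (∑ i, ewQ η adv y t i * expertLoss adv y t i)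
          = ∑ i, (ewQ η adv y t i - ewQ η adv y t i * adv t i) := by
        apply Finset.sum_congr rfl
        intro i _
        rcases hadv i with h2 | h2 <;> simp [expertLoss, h, h2] <;> ring
      rw [this, Finset.sum_sub_distrib, hq1, hp, aggP]
  rw [hm]
  show (let pp := aggP η adv y t
    let pstar := max pp (1 - pp)
    let kstar : ℝ := if (1 : ℝ) / 2 ≤ pp then 1 else 0
    let α := 2 * (1 - pstar)
    α * c + (1 - α) * (if kstar = y t then 0 else 1)) ≤ _
  simp only [← hp]
  rcases le_or_gt (1/2 : ℝ) p with hph | hph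
  · rw [max_eq_left (by linarith),
      show (if (1:ℝ)/2 ≤ p then (1:ℝ) else 0) = 1 from if_pos hph]
    rcases hy with h | h
    · rw [h, if_neg (by norm_num), if_neg (by norm_num)]
      nlinarith
    · rw [h, if_pos rfl, if_pos rfl]
      nlinarith
  · rw [max_eq_right (by linarith),
      show (if (1:ℝ)/2 ≤ p then (1:ℝ) else 0) = 0 from if_neg (not_le.mpr hph)]
    rcases hy with h | h
    · rw [h, if_pos rfl, if_neg (by norm_num)]
      nlinarith
    · rw [h, if_neg (by norm_num), if_pos rfl]
      nlinarith

/-- Slow-rate bound: for any `c ≤ 1/2` and any `η > 0`, the exponentially weighted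
forecaster with abstention satisfies `R_T ≤ (log N)/η + ηT/8`. -/
theorem abstention_slow_rate (N T : ℕ) (hN : 2 ≤ N) (hT : 1 ≤ T) (c η : ℝ)
    (hc0 : 0 ≤ c) (hc : c ≤ 1 / 2) (hη0 : 0 < η)
    (adv : ℕ → Fin N → ℝ) (y : ℕ → ℝ)
    (hadv : ∀ t i, adv t i = 0 ∨ adv t i = 1) (hy : ∀ t, y t = 0 ∨ y t = 1) :
    (∑ t ∈ Finset.range T, expAlgLoss η (fun _ => c) adv y t)
        - ⨅ i : Fin N, ∑ t ∈ Finset.range T, expertLoss adv y t i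
      ≤ Real.log N / η + η * T / 8 := by
  haveI : Nonempty (Fin N) := Fin.pos_iff_nonempty.mp (by omega)
  set W : ℕ → ℝ :=
    fun t => ∑ j, Real.exp (-η * ∑ k ∈ Finset.range t, expertLoss adv y k j) with hW
  have hWpos : ∀ t, 0 < W t :=
    fun t => Finset.sum_pos (fun j _ => Real.exp_pos _) Finset.univ_nonempty
  set m : ℕ → ℝ := fun t => ∑ i, ewQ η adv y t i * expertLoss adv y t i with hm
  have hℓ01 : ∀ t i, expertLoss adv y t i = 0 ∨ expertLoss adv y t i = 1 := by
    intro t i; unfold expertLoss; split <;> simp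
  have hℓ0 : ∀ t i, 0 ≤ expertLoss adv y t i := by
    intro t i; rcases hℓ01 t i with h | h <;> rw [h] <;> norm_num
  have hq0 : ∀ t i, 0 ≤ ewQ η adv y t i := fun t i =>
    div_nonneg (Real.exp_pos _).le (hWpos t).le
  have hq1 : ∀ t, ∑ i, ewQ η adv y t i = 1 := by
    intro t
    simp only [ewQ]
    rw [← Finset.sum_div, div_self (hWpos t).ne']
  have hm0 : ∀ t, 0 ≤ m t := fun t =>
    Finset.sum_nonneg fun i _ => mul_nonneg (hq0 t i) (hℓ0 t i)
  have hm1 : ∀ t, m t ≤ 1 := by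
    intro t
    calc m t ≤ ∑ i, ewQ η adv y t i := Finset.sum_le_sum fun i _ => by
          rcases hℓ01 t i with h | h <;> rw [h] <;> simp [hq0 t i]
      _ = 1 := hq1 t
  have hstep : ∀ t, W (t + 1) = W t * (1 - m t + m t * Real.exp (-η)) := by
    intro t
    have hterm : ∀ j : Fin N,
        Real.exp (-η * ∑ k ∈ Finset.range (t + 1), expertLoss adv y k j)
          = Real.exp (-η * ∑ k ∈ Finset.range t, expertLoss adv y k j)
            + (Real.exp (-η) - 1) *
              (Real.exp (-η * ∑ k ∈ Finset.range t, expertLoss adv y k j)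
                * expertLoss adv y t j) := by
      intro j
      rw [Finset.sum_range_succ, show -η * ((∑ k ∈ Finset.range t, expertLoss adv y k j)
            + expertLoss adv y t j)
          = -η * (∑ k ∈ Finset.range t, expertLoss adv y k j) + -η * expertLoss adv y t j
          by ring, Real.exp_add]
      rcases hℓ01 t j with h | h <;> rw [h] <;> simp <;> ring
    have hWm : W t * m t
        = ∑ j, Real.exp (-η * ∑ k ∈ Finset.range t, expertLoss adv y k j)
            * expertLoss adv y t j := by
      rw [hm, Finset.mul_sum]
      apply Finset.sum_congr rfl
      intro j _
      simp only [ewQ]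
      have hS : (∑ j, Real.exp (-η * ∑ k ∈ Finset.range t, expertLoss adv y k j)) = W t := rfl
      rw [hS]
      have hne := (hWpos t).ne'
      field_simp
    calc W (t + 1) = ∑ j, (Real.exp (-η * ∑ k ∈ Finset.range t, expertLoss adv y k j)
            + (Real.exp (-η) - 1) *
              (Real.exp (-η * ∑ k ∈ Finset.range t, expertLoss adv y k j)
                * expertLoss adv y t j)) := Finset.sum_congr rfl fun j _ => hterm j
      _ = W t + (Real.exp (-η) - 1) * (W t * m t) := by
          rw [Finset.sum_add_distrib, ← Finset.mul_sum, hWm, hW]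
      _ = W t * (1 - m t + m t * Real.exp (-η)) := by ring
  have hlogstep : ∀ t, Real.log (W (t + 1)) ≤ Real.log (W t) - η * m t + η ^ 2 / 8 := by
    intro t
    rw [hstep t, Real.log_mul (hWpos t).ne' (denom_pos (hm0 t) (hm1 t) η).ne']
    have := bernoulli_hoeffding (hm0 t) (hm1 t) hη0.le
    linarith
  have htel : ∀ S : ℕ, Real.log (W S)
      ≤ Real.log (W 0) - η * (∑ t ∈ Finset.range S, m t) + S * (η ^ 2 / 8) := by
    intro S
    induction S with
    | zero => simp
    | succ n ih =>
      rw [Finset.sum_range_succ]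
      have := hlogstep n
      push_cast
      push_cast at ih
      linarith
  have hW0 : Real.log (W 0) = Real.log N := by
    have : W 0 = N := by simp [hW]
    rw [this]
  obtain ⟨i0, hi0⟩ := exists_eq_ciInf_of_finite
    (f := fun i : Fin N => ∑ t ∈ Finset.range T, expertLoss adv y t i)
  have hlb : Real.exp (-η * ∑ t ∈ Finset.range T, expertLoss adv y t i0) ≤ W T :=
    Finset.single_le_sum
      (f := fun j => Real.exp (-η * ∑ t ∈ Finset.range T, expertLoss adv y t j))
      (fun j _ => (Real.exp_pos _).le) (Finset.mem_univ i0)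
  have hlb2 : -η * (∑ t ∈ Finset.range T, expertLoss adv y t i0) ≤ Real.log (W T) :=
    (Real.le_log_iff_exp_le (hWpos T)).mpr hlb
  have hsum_le : (∑ t ∈ Finset.range T, expAlgLoss η (fun _ => c) adv y t)
      ≤ ∑ t ∈ Finset.range T, m t :=
    Finset.sum_le_sum fun t _ => per_round hN η c hc0 hc adv y t (fun i => hadv t i) (hy t)
  have h1 := htel T
  rw [hW0] at h1
  have key : (∑ t ∈ Finset.range T, m t)
      - (∑ t ∈ Finset.range T, expertLoss adv y t i0)
      ≤ Real.log N / η + η * T / 8 := by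
    have h3 : ((∑ t ∈ Finset.range T, m t)
        - (∑ t ∈ Finset.range T, expertLoss adv y t i0)) * η
        ≤ Real.log N + η ^ 2 * T / 8 := by nlinarith [h1, hlb2]
    have h4 : ((∑ t ∈ Finset.range T, m t)
        - (∑ t ∈ Finset.range T, expertLoss adv y t i0))
        = (((∑ t ∈ Finset.range T, m t)
        - (∑ t ∈ Finset.range T, expertLoss adv y t i0)) * η) / η := by
      field_simp
    rw [h4]
    calc _ ≤ (Real.log N + η ^ 2 * T / 8) / η := by
          gcongr
      _ = Real.log N / η + η * T / 8 := by field_simp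
  have hinf : (⨅ i : Fin N, ∑ t ∈ Finset.range T, expertLoss adv y t i)
      = ∑ t ∈ Finset.range T, expertLoss adv y t i0 := hi0.symm
  rw [hinf]
  linarith [hsum_le, key]
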